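/- Let $X$ be a Banach space, let $x \in S_X$ be a super $\Delta$-point, and let $W$ be a relatively weakly open subset of $B_X$ containing $x$. Then for every $\varepsilon > 0$ there exists a sequence $(x_n)$ in $W$ such that $\|x_i - x_j\| > 2 - \varepsilon$ for all $i \neq j$. In particular, $\alpha(W) = 2$. -/

import Mathlib

open Metric Set Pointwise Filter Topology

variable {X : Type*} [NormedAddCommGroup X] [NormedSpace ℝ X]

def sliceSet (f : X →L[ℝ] ℝ) (δ : ℝ) : Set X :=
  {y ∈ closedBall (0 : X) 1 | 1 - δ < f y}

def IsSlice (S : Set X) : Prop :=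
  ∃ (f : X →L[ℝ] ℝ) (δ : ℝ), ‖f‖ = 1 ∧ 0 < δ ∧ S = sliceSet f δ

def IsCCS (C : Set X) : Prop :=
  ∃ (n : ℕ) (l : Fin n → ℝ) (S : Fin n → Set X),
    (∀ i, 0 < l i) ∧ (∑ i, l i) = 1 ∧ (∀ i, IsSlice (S i)) ∧
    C = ∑ i, l i • S i

def RelWeakOpen (V : Set X) : Prop :=
  ∃ U : Set X, IsOpen (show Set (WeakSpace ℝ X) from U) ∧ V = U ∩ closedBall 0 1

def weakClosure (A : Set X) : Set X :=
  @closure (WeakSpace ℝ X) _ A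

def SuperDeltaPoint (x : X) : Prop :=
  ∀ V : Set X, RelWeakOpen V → x ∈ V → ∀ ε > 0, ∃ y ∈ V, 2 - ε < ‖x - y‖

def SuperDaugavetPoint (x : X) : Prop :=
  ∀ V : Set X, RelWeakOpen V → V.Nonempty → ∀ ε > 0, ∃ y ∈ V, 2 - ε < ‖x - y‖

def CcsDeltaPoint (x : X) : Prop :=
  ∀ C : Set X, IsCCS C → x ∈ C → ∀ ε > 0, ∃ y ∈ C, 2 - ε < ‖x - y‖

def CcsDaugavetPoint (x : X) : Prop :=
  ∀ C : Set X, IsCCS C → ∀ ε > 0, ∃ y ∈ C, 2 - ε < ‖x - y‖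

noncomputable def kuratowski {X : Type*} [NormedAddCommGroup X] (A : Set X) : ℝ :=
  sInf {ε : ℝ | 0 ≤ ε ∧ ∃ (n : ℕ) (c : Fin n → Set X),
    A ⊆ ⋃ i, c i ∧ ∀ i, EMetric.diam (c i) ≤ ENNReal.ofReal ε}

open scoped Classical in
/-- Auxiliary step function: given the previous points/functionals, pick (by choice) the next
point and functional if possible. -/
noncomputable def sdStep (x : X) (W : Set X) (δ : ℝ) (n : ℕ)
    (p : Fin n → X × (X →L[ℝ] ℝ)) : X × (X →L[ℝ] ℝ) :=
  if h : ∃ q : X × (X →L[ℝ] ℝ), q.1 ∈ W ∧ (∀ i, 1 - δ < (p i).2 q.1) ∧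
      ‖q.2‖ = 1 ∧ q.2 q.1 < -(1 - δ) ∧ 1 - δ < q.2 x
  then h.choose else (x, 0)

noncomputable def sdSeq (x : X) (W : Set X) (δ : ℝ) : ℕ → X × (X →L[ℝ] ℝ) :=
  Nat.lt_wfRel.wf.fix (fun n ih => sdStep x W δ n (fun i : Fin n => ih i i.isLt))

lemma sdSeq_eq (x : X) (W : Set X) (δ : ℝ) (n : ℕ) :
    sdSeq x W δ n = sdStep x W δ n (fun i : Fin n => sdSeq x W δ i) :=
  Nat.lt_wfRel.wf.fix_eq _ n

lemma continuous_weak (f : X →L[ℝ] ℝ) : Continuous fun z : WeakSpace ℝ X => f z :=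
  WeakBilin.eval_continuous ((topDualPairing ℝ X).flip) f

lemma sdSeq_spec (x : X) (h : SuperDeltaPoint x) (W : Set X)
    (hW : RelWeakOpen W) (hxW : x ∈ W) (δ : ℝ) (hδ0 : 0 < δ) (hδ1 : δ ≤ 1 / 2) :
    ∀ n : ℕ, (sdSeq x W δ n).1 ∈ W ∧
      (∀ i : Fin n, 1 - δ < (sdSeq x W δ i).2 (sdSeq x W δ n).1) ∧
      ‖(sdSeq x W δ n).2‖ = 1 ∧
      (sdSeq x W δ n).2 (sdSeq x W δ n).1 < -(1 - δ) ∧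
      1 - δ < (sdSeq x W δ n).2 x := by
  obtain ⟨U, hU, hWU⟩ := hW
  have hWball : W ⊆ closedBall 0 1 := by rw [hWU]; exact inter_subset_right
  intro n
  induction n using Nat.strong_induction_on with
  | _ n ih =>
    -- the relatively weakly open set
    set V : Set X := W ∩ ⋂ i : Fin n, {y : X | 1 - δ < (sdSeq x W δ i).2 y} with hV
    have hVopen : RelWeakOpen V := by
      refine ⟨U ∩ ⋂ i : Fin n, (fun y : X => (sdSeq x W δ i).2 y) ⁻¹' Ioi (1 - δ), ?_, ?_⟩
      · exact hU.inter (isOpen_iInter_of_finite fun i =>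
          (isOpen_Ioi).preimage (continuous_weak (sdSeq x W δ i).2))
      · rw [hV, hWU]
        ext y
        simp only [mem_inter_iff, mem_iInter, mem_preimage, mem_Ioi, mem_setOf_eq]
        tauto
    have hxV : x ∈ V := by
      refine ⟨hxW, mem_iInter.2 fun i => ?_⟩
      exact (ih i i.isLt).2.2.2.2
    obtain ⟨y, hyV, hy⟩ := h V hVopen hxV δ hδ0
    have hxy0 : x - y ≠ 0 := by
      intro h0
      rw [h0, norm_zero] at hy
      linarith
    obtain ⟨g, hg1, hgxy⟩ := exists_dual_vector ℝ (x - y) (norm_ne_zero_iff.2 hxy0)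
    have hgxy' : g (x - y) = ‖x - y‖ := by exact_mod_cast hgxy
    have hyb : ‖y‖ ≤ 1 := by
      have := hWball hyV.1
      simpa using this
    have hgy1 : |g y| ≤ 1 := by
      calc |g y| ≤ ‖g‖ * ‖y‖ := g.le_opNorm y
      _ ≤ 1 := by rw [hg1]; simpa using hyb
    have hgx1 : |g x| ≤ 1 := by
      calc |g x| ≤ ‖g‖ * ‖x‖ := g.le_opNorm x
      _ ≤ 1 := by
        rw [hg1, one_mul]
        have := hWball hxW
        simpa using this
    have hsub : g x - g y = ‖x - y‖ := by rw [← hgxy']; simp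
    have hEx : ∃ q : X × (X →L[ℝ] ℝ), q.1 ∈ W ∧
        (∀ i : Fin n, 1 - δ < ((fun i : Fin n => sdSeq x W δ i) i).2 q.1) ∧
        ‖q.2‖ = 1 ∧ q.2 q.1 < -(1 - δ) ∧ 1 - δ < q.2 x := by
      refine ⟨(y, g), hyV.1, ?_, hg1, ?_, ?_⟩
      · intro i
        have := mem_iInter.1 hyV.2 i
        exact this
      · have : g x ≤ 1 := le_trans (le_abs_self _) hgx1
        simp only
        linarith
      · have : -1 ≤ g y := by
          have := neg_abs_le (g y); linarith
        simp only
        linarith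
    rw [sdSeq_eq x W δ n, sdStep, dif_pos hEx]
    exact hEx.choose_spec

theorem superDelta_separated_sequence {X : Type*} [NormedAddCommGroup X]
    [NormedSpace ℝ X] [CompleteSpace X] (x : X) (hx : ‖x‖ = 1)
    (h : SuperDeltaPoint x) (W : Set X) (hW : RelWeakOpen W) (hxW : x ∈ W) :
    (∀ ε > 0, ∃ u : ℕ → X, (∀ n, u n ∈ W) ∧
      ∀ i j : ℕ, i ≠ j → 2 - ε < ‖u i - u j‖) ∧
    kuratowski W = 2 := by
  have main : ∀ ε > 0, ∃ u : ℕ → X, (∀ n, u n ∈ W) ∧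
      ∀ i j : ℕ, i ≠ j → 2 - ε < ‖u i - u j‖ := by
    intro ε hε
    set δ : ℝ := min ε 1 / 2 with hδ
    have hδ0 : 0 < δ := by positivity
    have hδ1 : δ ≤ 1 / 2 := by
      rw [hδ]; gcongr; exact min_le_right _ _
    have spec := sdSeq_spec x h W hW hxW δ hδ0 hδ1
    refine ⟨fun n => (sdSeq x W δ n).1, fun n => (spec n).1, ?_⟩
    have key : ∀ i j : ℕ, i < j → 2 - ε < ‖(sdSeq x W δ i).1 - (sdSeq x W δ j).1‖ := by
      intro i j hij
      set f := (sdSeq x W δ i).2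
      have h1 : 1 - δ < f (sdSeq x W δ j).1 := (spec j).2.1 ⟨i, hij⟩
      have h2 : f (sdSeq x W δ i).1 < -(1 - δ) := (spec i).2.2.2.1
      have h3 : f ((sdSeq x W δ j).1 - (sdSeq x W δ i).1) ≤
          ‖(sdSeq x W δ j).1 - (sdSeq x W δ i).1‖ := by
        calc f ((sdSeq x W δ j).1 - (sdSeq x W δ i).1) ≤
            |f ((sdSeq x W δ j).1 - (sdSeq x W δ i).1)| := le_abs_self _
          _ ≤ ‖f‖ * ‖(sdSeq x W δ j).1 - (sdSeq x W δ i).1‖ := f.le_opNorm _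
          _ = ‖(sdSeq x W δ j).1 - (sdSeq x W δ i).1‖ := by
              rw [(spec i).2.2.1, one_mul]
      rw [map_sub] at h3
      rw [norm_sub_rev]
      have hmin : min ε 1 ≤ ε := min_le_left _ _
      have : 2 - 2 * δ = 2 - min ε 1 := by rw [hδ]; ring
      linarith
    intro i j hij
    rcases lt_or_gt_of_ne hij with hlt | hgt
    · exact key i j hlt
    · rw [norm_sub_rev]; exact key j i hgt
  refine ⟨main, ?_⟩
  obtain ⟨U, hU, hWU⟩ := hW
  have hWball : W ⊆ closedBall 0 1 := by rw [hWU]; exact inter_subset_right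
  have h2mem : (2 : ℝ) ∈ {ε : ℝ | 0 ≤ ε ∧ ∃ (n : ℕ) (c : Fin n → Set X),
      W ⊆ ⋃ i, c i ∧ ∀ i, EMetric.diam (c i) ≤ ENNReal.ofReal ε} := by
    refine ⟨by norm_num, 1, fun _ => closedBall 0 1, ?_, ?_⟩
    · intro y hy
      exact mem_iUnion.2 ⟨0, hWball hy⟩
    · intro _
      refine EMetric.diam_le fun a ha b hb => ?_
      rw [edist_dist]
      refine ENNReal.ofReal_le_ofReal ?_
      have ha' : dist a (0 : X) ≤ 1 := by simpa using ha
      have hb' : dist b (0 : X) ≤ 1 := by simpa using hb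
      calc dist a b ≤ dist a 0 + dist 0 b := dist_triangle _ _ _
        _ ≤ 2 := by rw [dist_comm (0 : X) b]; linarith
  have hlb : ∀ ε ∈ {ε : ℝ | 0 ≤ ε ∧ ∃ (n : ℕ) (c : Fin n → Set X),
      W ⊆ ⋃ i, c i ∧ ∀ i, EMetric.diam (c i) ≤ ENNReal.ofReal ε}, (2 : ℝ) ≤ ε := by
    rintro ε ⟨hε0, n, c, hcov, hdiam⟩
    by_contra hlt
    push_neg at hlt
    obtain ⟨u, huW, husep⟩ := main (2 - ε) (by linarith)
    -- n+1 points, n sets: pigeonhole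
    have hmap : ∀ k : Fin (n + 1), ∃ i : Fin n, u k ∈ c i := by
      intro k
      have := hcov (huW k)
      exact mem_iUnion.1 this
    choose φ hφ using hmap
    have hcard : Fintype.card (Fin n) < Fintype.card (Fin (n + 1)) := by simp
    obtain ⟨a, b, hab, hφab⟩ := Fintype.exists_ne_map_eq_of_card_lt φ hcard
    have hdist : dist (u a) (u b) ≤ ε := by
      have h1 : edist (u a) (u b) ≤ ENNReal.ofReal ε := by
        refine le_trans (EMetric.edist_le_diam_of_mem (hφ a) ?_) (hdiam (φ a))
        rw [hφab]; exact hφ b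
      rw [edist_dist] at h1
      exact (ENNReal.ofReal_le_ofReal_iff hε0).1 h1
    have hsep : 2 - (2 - ε) < ‖u a - u b‖ := by
      refine husep a b ?_
      exact fun hc => hab (by exact_mod_cast Fin.val_injective (by simp [hc]))
    rw [← dist_eq_norm] at hsep
    linarith
  have hne : {ε : ℝ | 0 ≤ ε ∧ ∃ (n : ℕ) (c : Fin n → Set X),
      W ⊆ ⋃ i, c i ∧ ∀ i, EMetric.diam (c i) ≤ ENNReal.ofReal ε}.Nonempty := ⟨2, h2mem⟩
  have hbdd : BddBelow {ε : ℝ | 0 ≤ ε ∧ ∃ (n : ℕ) (c : Fin n → Set X),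
      W ⊆ ⋃ i, c i ∧ ∀ i, EMetric.diam (c i) ≤ ENNReal.ofReal ε} :=
    ⟨0, fun ε hε => hε.1⟩
  exact le_antisymm (csInf_le hbdd h2mem) (le_csInf hne hlb)
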